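/- Let p be a prime and m ≥ 2, and set e = (p^m − 1)/(p − 1). Let ω be a primitive element of GF(p^m). Then the set D = {i : 0 ≤ i ≤ e−1, Tr(ω^i) = 0} is an (e, (p^{m-1}−1)/(p−1), (p^{m-2}−1)/(p−1)) difference set in the cyclic group (Z_e, +): every nonzero element of Z_e is expressible as a difference i − j (mod e) with i, j ∈ D in exactly (p^{m-2}−1)/(p−1) ways. -/

import Mathlib

/-- The trace-like map x ↦ x + x^p + ... + x^(p^(m-1)), computed inside the field. -/
def fieldTr (p m : ℕ) {F : Type} [Field F] (x : F) : F :=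
  ∑ i ∈ Finset.range m, x ^ p ^ i

/-- D is a (v,k,λ) difference set in the finite abelian group G. -/
def IsDiffSet {G : Type} [AddCommGroup G] [Fintype G] [DecidableEq G]
    (D : Finset G) (v k l : ℕ) : Prop :=
  Fintype.card G = v ∧ D.card = k ∧
    ∀ g : G, g ≠ 0 → ((D ×ˢ D).filter (fun q => q.1 - q.2 = g)).card = l

open Finset Polynomial

section aux
variable {p m : ℕ} {F : Type} [Field F]

lemma dennNatCardSubtype {α : Type} [Fintype α] (P : α → Prop) [DecidablePred P] :
    Nat.card {x // P x} = (univ.filter P).card := by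
  rw [Nat.card_eq_fintype_card]; exact Fintype.card_subtype P

lemma dennAddHomCard {A B : Type} [AddCommGroup A] [AddCommGroup B] (f : A →+ B) :
    Nat.card A = Nat.card f.range * Nat.card f.ker := by
  rw [AddSubgroup.card_eq_card_quotient_mul_card_addSubgroup f.ker]
  congr 1
  exact Nat.card_congr (QuotientAddGroup.quotientKerEquivRange f).toEquiv

lemma dennRootBound [Fintype F] [DecidableEq F] (q : F[X]) (hq : q ≠ 0)
    (P : F → Prop) [DecidablePred P] (h : ∀ x, P x ↔ q.eval x = 0) :
    (univ.filter P).card ≤ q.natDegree := by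
  calc (univ.filter P).card ≤ q.roots.toFinset.card := by
        apply Finset.card_le_card
        intro x hx
        simp only [mem_filter] at hx
        simp [Multiset.mem_toFinset, mem_roots', hq, IsRoot, (h x).mp hx.2]
    _ ≤ _ := (Multiset.toFinset_card_le _).trans q.card_roots'

lemma dennCharP (hp : p.Prime) [Fintype F] (hF : Fintype.card F = p ^ m) (hm : 2 ≤ m) :
    CharP F p := by
  obtain ⟨n, hq, hcard⟩ := FiniteField.card F (ringChar F)
  have h1 : ringChar F ∣ p ^ m := by
    rw [← hF, hcard]
    exact dvd_pow_self _ (by exact_mod_cast n.ne_zero)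
  have h2 := (Nat.prime_dvd_prime_iff_eq hq hp).mp (hq.dvd_of_dvd_pow h1)
  rw [← h2]; exact ringChar.charP F

lemma fieldTr_zero (hp : p.Prime) : fieldTr p m (0 : F) = 0 := by
  unfold fieldTr
  rw [Finset.sum_eq_zero]
  intro i _
  exact zero_pow (pow_ne_zero i hp.pos.ne')

lemma fieldTr_add (hp : p.Prime) [CharP F p] (x y : F) :
    fieldTr p m (x + y) = fieldTr p m x + fieldTr p m y := by
  haveI : Fact p.Prime := ⟨hp⟩
  unfold fieldTr
  rw [← Finset.sum_add_distrib]
  exact Finset.sum_congr rfl fun i _ => add_pow_char_pow x y p i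

/-- the trace as an additive hom -/
def trHom (p m : ℕ) (F : Type) [Field F] (hp : p.Prime) [CharP F p] : F →+ F where
  toFun := fieldTr p m
  map_zero' := fieldTr_zero hp
  map_add' := fieldTr_add hp

@[simp] lemma trHom_apply (hp : p.Prime) [CharP F p] (x : F) :
    trHom p m F hp x = fieldTr p m x := rfl

lemma cpow_fix {c : F} (hc : c ^ p = c) : ∀ i, c ^ p ^ i = c
  | 0 => pow_one c
  | (i + 1) => by rw [pow_succ, pow_mul, cpow_fix hc i, hc]

lemma fieldTr_mul_fix {c : F} (hc : c ^ p = c) (x : F) :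
    fieldTr p m (c * x) = c * fieldTr p m x := by
  unfold fieldTr
  rw [Finset.mul_sum]
  exact Finset.sum_congr rfl fun i _ => by rw [mul_pow, cpow_fix hc i]

lemma fieldTr_pow_p (hp : p.Prime) [CharP F p] [Fintype F] (hF : Fintype.card F = p ^ m)
    (x : F) : fieldTr p m x ^ p = fieldTr p m x := by
  haveI : Fact p.Prime := ⟨hp⟩
  unfold fieldTr
  rw [sum_pow_char]
  have hx : ∀ i, (x ^ p ^ i) ^ p = x ^ p ^ (i + 1) := fun i => by
    rw [← pow_mul, ← pow_succ]
  rw [Finset.sum_congr rfl fun i _ => hx i]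
  have h1 := Finset.sum_range_succ' (fun i => x ^ p ^ i) m
  have h2 := Finset.sum_range_succ (fun i => x ^ p ^ i) m
  have h3 : x ^ p ^ m = x ^ p ^ 0 := by
    rw [pow_zero, pow_one, ← hF, FiniteField.pow_card]
  rw [h3] at h2
  exact add_right_cancel (h1.symm.trans h2)

/-- the fundamental counts: kernel of trace has p^(m-1) elements and the
set of Frobenius-fixed points has p elements. -/
lemma dennCount1 [Fintype F] [DecidableEq F] (hp : p.Prime) [CharP F p]
    (hF : Fintype.card F = p ^ m) (hm : 2 ≤ m) :
    (univ.filter fun x : F => fieldTr p m x = 0).card = p ^ (m - 1) ∧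
    (univ.filter fun c : F => c ^ p = c).card = p := by
  haveI : Fact p.Prime := ⟨hp⟩
  set f := trHom p m F hp with hf
  -- kernel bound
  have hker_le : (univ.filter fun x : F => fieldTr p m x = 0).card ≤ p ^ (m - 1) := by
    have hq0 : (∑ i ∈ range m, (X : F[X]) ^ p ^ i) ≠ 0 := by
      intro h
      have hc : (∑ i ∈ range m, (X : F[X]) ^ p ^ i).coeff 1 = 1 := by
        rw [finset_sum_coeff, Finset.sum_eq_single 0]
        · simp
        · intro i _ hi0
          rw [coeff_X_pow, if_neg]
          intro h1
          exact absurd h1.symm (Nat.one_lt_pow hi0 hp.one_lt).ne'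
        · intro h0; exact absurd (mem_range.mpr (by omega)) h0
      rw [h] at hc; simp at hc
    have hdeg : (∑ i ∈ range m, (X : F[X]) ^ p ^ i).natDegree ≤ p ^ (m - 1) := by
      refine (natDegree_sum_le _ _).trans ?_
      rw [Finset.fold_max_le]
      refine ⟨Nat.zero_le _, fun i hi => ?_⟩
      simp only [Function.comp_apply, natDegree_X_pow]
      exact Nat.pow_le_pow_right hp.pos (by simp only [mem_range] at hi; omega)
    refine (dennRootBound _ hq0 (fun x : F => fieldTr p m x = 0) ?_).trans hdeg
    intro x
    simp [fieldTr, eval_finset_sum]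
  -- fixed points bound
  have hR_le : (univ.filter fun c : F => c ^ p = c).card ≤ p := by
    have hq0 : ((X : F[X]) ^ p - X) ≠ 0 := by
      intro h
      have hc : ((X : F[X]) ^ p - X).coeff p = 1 := by
        rw [coeff_sub, coeff_X_pow, if_pos rfl, coeff_X,
          if_neg (by have := hp.one_lt; omega : 1 ≠ p)]
        ring
      rw [h] at hc; simp at hc
    have hdeg : ((X : F[X]) ^ p - X).natDegree ≤ p := by
      refine (natDegree_sub_le _ _).trans ?_
      rw [natDegree_X_pow, natDegree_X]
      exact max_le le_rfl hp.one_lt.le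
    refine (dennRootBound _ hq0 (fun c : F => c ^ p = c) ?_).trans hdeg
    intro c
    rw [eval_sub, eval_pow, eval_X, sub_eq_zero]
  -- first isomorphism
  have hprod := dennAddHomCard f
  rw [Nat.card_eq_fintype_card, hF] at hprod
  have hkerc : Nat.card f.ker = (univ.filter fun x : F => fieldTr p m x = 0).card := by
    have e1 : Nat.card f.ker = Nat.card {x : F // fieldTr p m x = 0} :=
      Nat.card_congr (Equiv.subtypeEquivRight fun x => by
        simp [AddMonoidHom.mem_ker, hf])
    rw [e1, dennNatCardSubtype]
  haveI : DecidablePred fun y : F => y ∈ f.range := Classical.decPred _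
  have hrangec : Nat.card f.range = (univ.filter fun y : F => y ∈ f.range).card :=
    dennNatCardSubtype fun y : F => y ∈ f.range
  have hrange_le : Nat.card f.range ≤ (univ.filter fun c : F => c ^ p = c).card := by
    rw [hrangec]
    apply Finset.card_le_card
    intro y hy
    simp only [mem_filter, mem_univ, true_and] at hy ⊢
    obtain ⟨x, rfl⟩ := hy
    exact fieldTr_pow_p hp hF x
  -- arithmetic
  have hm1 : m - 1 + 1 = m := by omega
  have hppow : p * p ^ (m - 1) = p ^ m := by
    conv_rhs => rw [← hm1, pow_succ']
  set k := Nat.card f.ker with hk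
  set r := Nat.card f.range with hr
  have hk_le : k ≤ p ^ (m - 1) := hkerc ▸ hker_le
  have hr_le : r ≤ p := hrange_le.trans hR_le
  have hk_eq : k = p ^ (m - 1) := by
    have h1 : p ^ m ≤ p * k := by
      calc p ^ m = r * k := hprod
        _ ≤ p * k := Nat.mul_le_mul_right k hr_le
    have h2 : p ^ (m - 1) ≤ k := by
      have := hppow ▸ h1
      exact Nat.le_of_mul_le_mul_left this hp.pos
    omega
  have hr_eq : r = p := by
    have h1 : r * p ^ (m - 1) = p * p ^ (m - 1) := by
      calc r * p ^ (m - 1) = p ^ m := by rw [← hk_eq]; exact hprod.symm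
        _ = p * p ^ (m - 1) := hppow.symm
    have hpos : 0 < p ^ (m - 1) := Nat.pow_pos hp.pos
    exact Nat.eq_of_mul_eq_mul_right hpos h1
  constructor
  · rw [← hkerc, hk_eq]
  · have := hr_eq ▸ hrange_le
    omega

lemma dennExistsNe [Fintype F] [DecidableEq F] (hp : p.Prime) [CharP F p]
    (hF : Fintype.card F = p ^ m) (hm : 2 ≤ m) : ∃ z : F, fieldTr p m z ≠ 0 := by
  by_contra h
  push_neg at h
  have h1 : (univ.filter fun x : F => fieldTr p m x = 0) = univ := by
    apply Finset.filter_true_of_mem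
    intro x _; exact h x
  have h2 := (dennCount1 hp hF hm).1
  rw [h1, Finset.card_univ, hF] at h2
  have h3 : p ^ (m - 1) < p ^ m := Nat.pow_lt_pow_right hp.one_lt (by omega)
  omega

lemma dennCount2 [Fintype F] [DecidableEq F] (hp : p.Prime) [CharP F p]
    (hF : Fintype.card F = p ^ m) (hm : 2 ≤ m) {l : F} (hl : ¬ l ^ p = l) :
    (univ.filter fun x : F => fieldTr p m x = 0 ∧ fieldTr p m (l * x) = 0).card
      = p ^ (m - 2) := by
  haveI : Fact p.Prime := ⟨hp⟩
  set f := trHom p m F hp with hf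
  set g : f.ker →+ F := AddMonoidHom.mk'
      (fun y : f.ker => fieldTr p m (l * (y : F)))
      (by
        intro a b
        push_cast
        rw [mul_add, fieldTr_add hp]) with hg
  have hprod := dennAddHomCard g
  -- card of f.ker
  have hK : Nat.card f.ker = p ^ (m - 1) := by
    have e1 : Nat.card f.ker = Nat.card {x : F // fieldTr p m x = 0} :=
      Nat.card_congr (Equiv.subtypeEquivRight fun x => by
        simp [AddMonoidHom.mem_ker, hf])
    rw [e1, dennNatCardSubtype]
    exact (dennCount1 hp hF hm).1
  -- ker of g counts the double condition
  have hkerc : Nat.card g.ker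
      = (univ.filter fun x : F => fieldTr p m x = 0 ∧ fieldTr p m (l * x) = 0).card := by
    have e1 : g.ker ≃ {x : F // fieldTr p m x = 0 ∧ fieldTr p m (l * x) = 0} := by
      refine Equiv.trans (Equiv.subtypeEquivRight (q := fun y : f.ker =>
          fieldTr p m (l * (y : F)) = 0) fun y => by
            rw [AddMonoidHom.mem_ker]; exact Iff.rfl) ?_
      refine Equiv.trans (Equiv.subtypeSubtypeEquivSubtypeInter
          (fun x : F => x ∈ f.ker) (fun x : F => fieldTr p m (l * x) = 0)) ?_
      refine Equiv.subtypeEquivRight fun x => ?_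
      rw [and_congr_left_iff]
      intro _
      rw [AddMonoidHom.mem_ker]
      exact Iff.rfl
    rw [Nat.card_congr e1, dennNatCardSubtype]
  -- range of g
  have hrange_le : Nat.card g.range ≤ p := by
    haveI : DecidablePred fun y : F => y ∈ g.range := Classical.decPred _
    have e1 : Nat.card g.range = (univ.filter fun y : F => y ∈ g.range).card :=
      dennNatCardSubtype fun y : F => y ∈ g.range
    rw [e1]
    refine (Finset.card_le_card ?_).trans (dennCount1 hp hF hm).2.le
    intro y hy
    simp only [mem_filter, mem_univ, true_and] at hy ⊢
    obtain ⟨x, rfl⟩ := hy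
    exact fieldTr_pow_p hp hF _
  -- g is nontrivial
  have hnontriv : ∃ y : f.ker, g y ≠ 0 := by
    by_contra hcon
    push_neg at hcon
    have hall : ∀ x : F, fieldTr p m x = 0 → fieldTr p m (l * x) = 0 := by
      intro x hx
      exact hcon ⟨x, by simp [AddMonoidHom.mem_ker, hf, hx]⟩
    obtain ⟨z, hz⟩ := dennExistsNe hp hF hm
    have hzR : fieldTr p m z ^ p = fieldTr p m z := fieldTr_pow_p hp hF z
    set c := fieldTr p m (l * z) / fieldTr p m z with hc
    have hcR : c ^ p = c := by
      rw [hc, div_pow, hzR, fieldTr_pow_p hp hF]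
    have hsub : ∀ x y : F, fieldTr p m (x - y) = fieldTr p m x - fieldTr p m y := by
      intro x y
      exact map_sub (trHom p m F hp) x y
    have hkey : ∀ x : F, fieldTr p m (l * x) = c * fieldTr p m x := by
      intro x
      set d := fieldTr p m x / fieldTr p m z with hd
      have hdR : d ^ p = d := by rw [hd, div_pow, hzR, fieldTr_pow_p hp hF]
      have h1 : fieldTr p m (x - d * z) = 0 := by
        rw [hsub, fieldTr_mul_fix hdR, hd, div_mul_cancel₀ _ hz, sub_self]
      have h2 := hall _ h1
      rw [mul_sub, hsub] at h2
      have h3 : l * (d * z) = d * (l * z) := by ring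
      rw [h3, fieldTr_mul_fix hdR] at h2
      have h4 : fieldTr p m (l * x) = d * fieldTr p m (l * z) := sub_eq_zero.mp h2
      rw [h4, hd, hc]
      field_simp
    have hzero : ∀ x : F, fieldTr p m ((l - c) * x) = 0 := by
      intro x
      have : (l - c) * x = l * x - c * x := by ring
      rw [this, hsub, fieldTr_mul_fix hcR, hkey, sub_self]
    have hlc : l - c ≠ 0 := by
      intro h0
      exact hl (by rw [sub_eq_zero.mp h0]; exact hcR)
    have : fieldTr p m z = 0 := by
      have h5 := hzero ((l - c)⁻¹ * z)
      rw [← mul_assoc, mul_inv_cancel₀ hlc, one_mul] at h5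
      exact h5
    exact hz this
  -- conclude |range g| = p
  have hrange_eq : Nat.card g.range = p := by
    have hdvd : Nat.card g.range ∣ p ^ m := by
      have h1 := AddSubgroup.card_addSubgroup_dvd_card g.range
      rwa [Nat.card_eq_fintype_card (α := F), hF] at h1
    obtain ⟨k, _, hk⟩ := (Nat.dvd_prime_pow hp).mp hdvd
    obtain ⟨y, hy⟩ := hnontriv
    have hne1 : Nat.card g.range ≠ 1 := by
      intro h1
      have hbot : g.range = ⊥ := AddSubgroup.eq_bot_of_card_eq _ h1
      have hmem : g y ∈ g.range := ⟨y, rfl⟩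
      rw [hbot] at hmem
      exact hy (AddSubgroup.mem_bot.mp hmem)
    have hk0 : k ≠ 0 := by
      rintro rfl
      rw [pow_zero] at hk
      exact hne1 hk
    have hk2 : k < 2 := by
      by_contra hcon
      have h2 : p ^ 2 ≤ p ^ k := Nat.pow_le_pow_right hp.pos (by omega)
      have h3 : p < p ^ 2 := by nlinarith [hp.two_le]
      omega
    have : k = 1 := by omega
    rw [hk, this, pow_one]
  -- finish
  rw [← hkerc]
  rw [hK, hrange_eq] at hprod
  have hm2 : p ^ (m - 1) = p * p ^ (m - 2) := by
    have : m - 2 + 1 = m - 1 := by omega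
    rw [← this, pow_succ']
  rw [hm2] at hprod
  exact (Nat.eq_of_mul_eq_mul_left hp.pos hprod).symm

lemma dennOmega [Fintype F] (hp : p.Prime) (hm : 2 ≤ m) (hF : Fintype.card F = p ^ m)
    {ω : F} (hω : ∀ x : F, x ≠ 0 → ∃ n : ℕ, x = ω ^ n) :
    ω ≠ 0 ∧ orderOf ω = p ^ m - 1 := by
  classical
  have hω0 : ω ≠ 0 := by
    intro h0
    have hsub : (univ : Finset F) ⊆ {0, 1} := by
      intro x _
      by_cases hx : x = 0
      · simp [hx]
      · obtain ⟨n, hn⟩ := hω x hx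
        rcases n with - | n
        · simp [hn]
        · rw [h0, pow_succ, mul_zero] at hn
          exact absurd hn hx
    have h2 : Fintype.card F ≤ 2 := by
      rw [← Finset.card_univ]
      have h4 : ({0, 1} : Finset F).card ≤ 2 := by
        apply (Finset.card_insert_le _ _).trans
        simp
      exact (Finset.card_le_card hsub).trans h4
    have h3 : 4 ≤ p ^ m := by
      calc 4 = 2 ^ 2 := rfl
        _ ≤ p ^ 2 := Nat.pow_le_pow_left hp.two_le 2
        _ ≤ p ^ m := Nat.pow_le_pow_right hp.pos hm
    omega
  refine ⟨hω0, ?_⟩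
  set u : Fˣ := Units.mk0 ω hω0 with hu
  have hmem : ∀ v : Fˣ, v ∈ Subgroup.zpowers u := by
    intro v
    obtain ⟨n, hn⟩ := hω v v.ne_zero
    refine ⟨n, ?_⟩
    ext
    push_cast
    rw [hu]
    simp [hn]
  have h1 : orderOf u = p ^ m - 1 := by
    rw [orderOf_eq_card_of_forall_mem_zpowers hmem, Nat.card_eq_fintype_card,
      Fintype.card_units, hF]
  have h2 : orderOf ω = orderOf u := by
    rw [show ω = (u : F) from rfl, orderOf_units]
  rw [h2, h1]

lemma dennPowEFix {e : ℕ} (hp : p.Prime) (he : e * (p - 1) = p ^ m - 1)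
    {ω : F} (hω0 : ω ≠ 0) (horder : orderOf ω = p ^ m - 1) (k : ℕ) :
    (ω ^ (e * k)) ^ p = ω ^ (e * k) ∧ ω ^ (e * k) ≠ 0 := by
  have hne : ω ^ (e * k) ≠ 0 := pow_ne_zero _ hω0
  have h1 : (ω ^ (e * k)) ^ (p - 1) = 1 := by
    rw [← pow_mul]
    apply orderOf_dvd_iff_pow_eq_one.mp
    rw [horder, ← he]
    exact ⟨k, by ring⟩
  refine ⟨?_, hne⟩
  have hps : p - 1 + 1 = p := by have := hp.two_le; omega
  calc (ω ^ (e * k)) ^ p = (ω ^ (e * k)) ^ (p - 1) * ω ^ (e * k) := by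
        rw [← pow_succ, hps]
    _ = ω ^ (e * k) := by rw [h1, one_mul]

lemma dennFixPow1 {c : F} (hp : p.Prime) (hc : c ^ p = c) (hc0 : c ≠ 0) :
    c ^ (p - 1) = 1 := by
  have hps : p - 1 + 1 = p := by have := hp.two_le; omega
  have h1 : c ^ (p - 1) * c = 1 * c := by
    rw [← pow_succ, hps, hc, one_mul]
  exact mul_right_cancel₀ hc0 h1

/-- the partition of F^* into (p-1)-element cosets indexed by ZMod e. -/
lemma dennPartition [Fintype F] [DecidableEq F] {e : ℕ} [NeZero e]
    (hp : p.Prime) (hm : 2 ≤ m) (hF : Fintype.card F = p ^ m)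
    (he : e * (p - 1) = p ^ m - 1)
    {ω : F} (hω : ∀ x : F, x ≠ 0 → ∃ n : ℕ, x = ω ^ n)
    (hR : (univ.filter fun c : F => c ^ p = c).card = p)
    (P : F → Prop) [DecidablePred P]
    (hP : ∀ c x : F, c ^ p = c → c ≠ 0 → (P (c * x) ↔ P x)) :
    (univ.filter fun x : F => x ≠ 0 ∧ P x).card
      = ((univ : Finset (ZMod e)).filter fun i => P (ω ^ i.val)).card * (p - 1) := by
  obtain ⟨hω0, horder⟩ := dennOmega hp hm hF hω
  have hp1 : p - 1 ≠ 0 := by have := hp.two_le; omega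
  set Rs : Finset F := univ.filter (fun c : F => c ^ p = c ∧ c ≠ 0) with hRs
  have hRscard : Rs.card = p - 1 := by
    have h1 : Rs = (univ.filter fun c : F => c ^ p = c).erase 0 := by
      ext c
      simp only [hRs, mem_filter, mem_univ, true_and, Finset.mem_erase]
      tauto
    rw [h1, Finset.card_erase_of_mem, hR]
    simp only [mem_filter, mem_univ, true_and]
    exact zero_pow hp.pos.ne'
  -- val identity
  have hval : ∀ i : ZMod e, i.val < e := fun i => ZMod.val_lt i
  set u : Fˣ := Units.mk0 ω hω0 with hu
  have horderu : orderOf u = p ^ m - 1 := by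
    rw [← orderOf_units, show ((u : F)) = ω from rfl, horder]
  -- uniqueness of coset representation
  have huniq : ∀ (i j : ZMod e) (c d : F), c ^ p = c → c ≠ 0 → d ^ p = d → d ≠ 0 →
      c * ω ^ i.val = d * ω ^ j.val → i = j := by
    intro i j c d hc hc0 hd hd0 hcd
    have h1 : ω ^ (i.val * (p - 1)) = ω ^ (j.val * (p - 1)) := by
      have h2 : (c * ω ^ i.val) ^ (p - 1) = (d * ω ^ j.val) ^ (p - 1) := by rw [hcd]
      rwa [mul_pow, mul_pow, dennFixPow1 hp hc hc0, dennFixPow1 hp hd hd0,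
        one_mul, one_mul, ← pow_mul, ← pow_mul] at h2
    have h1u : u ^ (i.val * (p - 1)) = u ^ (j.val * (p - 1)) := by
      apply Units.ext
      rw [Units.val_pow_eq_pow_val, Units.val_pow_eq_pow_val]
      exact h1
    have h3 : i.val * (p - 1) ≡ j.val * (p - 1) [MOD e * (p - 1)] := by
      have := pow_eq_pow_iff_modEq.mp h1u
      rwa [horderu, ← he] at this
    have h4 : i.val ≡ j.val [MOD e] := Nat.ModEq.mul_right_cancel' hp1 h3
    have h5 : i.val = j.val := by
      have := h4
      unfold Nat.ModEq at this
      rwa [Nat.mod_eq_of_lt (hval i), Nat.mod_eq_of_lt (hval j)] at this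
    have h6 := ZMod.natCast_rightInverse (n := e) i
    rw [← h6, h5, ZMod.natCast_rightInverse j]
  -- the partition
  have key : (univ.filter fun x : F => x ≠ 0 ∧ P x)
      = (((univ : Finset (ZMod e)).filter fun i => P (ω ^ i.val)).biUnion
          fun i => Rs.image fun c => c * ω ^ i.val) := by
    ext x
    simp only [mem_filter, mem_biUnion, Finset.mem_image, mem_univ, true_and, hRs]
    constructor
    · rintro ⟨hx0, hxP⟩
      obtain ⟨n, rfl⟩ := hω x hx0
      obtain ⟨hfix, hne⟩ := dennPowEFix hp he hω0 horder (n / e)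
      have hdecomp : ω ^ n = ω ^ (e * (n / e)) * ω ^ ((n : ZMod e)).val := by
        rw [ZMod.val_natCast, ← pow_add, Nat.div_add_mod]
      refine ⟨(n : ZMod e), ?_, ω ^ (e * (n / e)), ⟨hfix, hne⟩, hdecomp.symm⟩
      rw [← hP _ _ hfix hne, ← hdecomp]
      exact hxP
    · rintro ⟨i, hi, c, ⟨hc, hc0⟩, rfl⟩
      exact ⟨mul_ne_zero hc0 (pow_ne_zero _ hω0), (hP _ _ hc hc0).mpr hi⟩
  rw [key, Finset.card_biUnion]
  · rw [Finset.sum_congr rfl (fun i _ => Finset.card_image_of_injective Rs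
      (mul_left_injective₀ (pow_ne_zero _ hω0)))]
    rw [Finset.sum_const, hRscard, smul_eq_mul]
  · intro i hi j hj hij
    rw [Function.onFun, Finset.disjoint_left]
    intro a hai haj
    simp only [Finset.mem_image, hRs, mem_filter, mem_univ, true_and] at hai haj
    obtain ⟨c, ⟨hc, hc0⟩, hca⟩ := hai
    obtain ⟨d, ⟨hd, hd0⟩, hda⟩ := haj
    exact hij (huniq i j c d hc hc0 hd hd0 (hca.trans hda.symm))

end aux

/-- With e = (p^m−1)/(p−1) and ω a primitive element of GF(p^m), the set
D = {i : 0 ≤ i ≤ e−1, Tr(ω^i) = 0} is an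
(e, (p^(m-1)−1)/(p−1), (p^(m-2)−1)/(p−1)) (Singer) difference set in (Z_e, +). -/
theorem denniston_stmt10 (p m e : ℕ) (hp : p.Prime) (hm : 2 ≤ m)
    [NeZero e] (he : e * (p - 1) = p ^ m - 1)
    (F : Type) [Field F] [Fintype F] (hF : Fintype.card F = p ^ m)
    (ω : F) (hω : ∀ x : F, x ≠ 0 → ∃ n : ℕ, x = ω ^ n)
    (D : Finset (ZMod e))
    (hD : ∀ i : ZMod e, i ∈ D ↔ fieldTr p m (ω ^ i.val) = 0) :
    IsDiffSet D e ((p ^ (m - 1) - 1) / (p - 1)) ((p ^ (m - 2) - 1) / (p - 1)) := by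
  classical
  haveI : CharP F p := dennCharP hp hF hm
  haveI : Fact p.Prime := ⟨hp⟩
  obtain ⟨hω0, horder⟩ := dennOmega hp hm hF hω
  obtain ⟨hker, hR⟩ := dennCount1 (F := F) hp hF hm
  have hp1 : 0 < p - 1 := by have := hp.two_le; omega
  refine ⟨ZMod.card e, ?_, ?_⟩
  · -- cardinality of D
    have hPinv : ∀ c x : F, c ^ p = c → c ≠ 0 →
        (fieldTr p m (c * x) = 0 ↔ fieldTr p m x = 0) := by
      intro c x hc hc0
      rw [fieldTr_mul_fix hc]
      simp [hc0]
    have hpart := dennPartition (e := e) hp hm hF he hω hR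
      (fun x => fieldTr p m x = 0) hPinv
    have hL : (univ.filter fun x : F => x ≠ 0 ∧ fieldTr p m x = 0).card
        = p ^ (m - 1) - 1 := by
      have h1 : (univ.filter fun x : F => x ≠ 0 ∧ fieldTr p m x = 0)
          = (univ.filter fun x : F => fieldTr p m x = 0).erase 0 := by
        ext x
        simp only [mem_filter, mem_univ, true_and, Finset.mem_erase]
      rw [h1, Finset.card_erase_of_mem, hker]
      simp only [mem_filter, mem_univ, true_and]
      exact fieldTr_zero hp
    have hDeq : D = (univ : Finset (ZMod e)).filter
        fun i => fieldTr p m (ω ^ i.val) = 0 := by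
      ext i
      simp [hD i]
    beta_reduce at hpart
    rw [hL, ← hDeq] at hpart
    exact (Nat.div_eq_of_eq_mul_left hp1 hpart).symm
  · -- the difference count
    intro g hg
    have hbij : ((D ×ˢ D).filter fun q => q.1 - q.2 = g).card
        = (D.filter fun j => j + g ∈ D).card := by
      apply Finset.card_bij' (fun q _ => q.2) (fun j _ => (j + g, j))
      · intro q hq
        simp only [Finset.mem_filter, Finset.mem_product] at hq
        obtain ⟨⟨h1, h2⟩, h3⟩ := hq
        simp only [Finset.mem_filter]
        have h4 : q.2 + g = q.1 := by rw [← h3]; ring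
        exact ⟨h2, h4 ▸ h1⟩
      · intro j hj
        simp only [Finset.mem_filter] at hj ⊢
        exact ⟨Finset.mem_product.mpr ⟨hj.2, hj.1⟩, by ring⟩
      · intro q hq
        simp only [Finset.mem_filter, Finset.mem_product] at hq
        have h4 : q.2 + g = q.1 := by rw [← hq.2]; ring
        exact Prod.ext h4 rfl
      · intro j hj
        rfl
    rw [hbij]
    set l : F := ω ^ g.val with hl
    have hlnot : ¬ l ^ p = l := by
      intro hc
      have hl0 : l ≠ 0 := pow_ne_zero _ hω0
      have h1 : l ^ (p - 1) = 1 := dennFixPow1 hp hc hl0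
      rw [hl, ← pow_mul] at h1
      have h2 : orderOf ω ∣ g.val * (p - 1) := orderOf_dvd_iff_pow_eq_one.mpr h1
      rw [horder, ← he] at h2
      have h3 : e ∣ g.val := (Nat.mul_dvd_mul_iff_right hp1).mp h2
      have hglt := ZMod.val_lt g
      have hgne : g.val ≠ 0 := fun h => hg ((ZMod.val_eq_zero g).mp h)
      have := Nat.le_of_dvd (Nat.pos_of_ne_zero hgne) h3
      omega
    have hcond : ∀ j : ZMod e, (j + g ∈ D) ↔ fieldTr p m (l * ω ^ j.val) = 0 := by
      intro j
      rw [hD]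
      obtain ⟨hfix, hne⟩ := dennPowEFix hp he hω0 horder ((j.val + g.val) / e)
      have hdecomp : ω ^ (j.val + g.val)
          = ω ^ (e * ((j.val + g.val) / e)) * ω ^ ((j + g).val) := by
        rw [ZMod.val_add, ← pow_add, Nat.div_add_mod]
      have h1 : fieldTr p m (ω ^ (e * ((j.val + g.val) / e)) * ω ^ ((j + g).val)) = 0
          ↔ fieldTr p m (ω ^ ((j + g).val)) = 0 := by
        rw [fieldTr_mul_fix hfix]
        simp [hne]
      rw [← h1, ← hdecomp, hl, ← pow_add, Nat.add_comm g.val j.val]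
    have hPinv2 : ∀ c x : F, c ^ p = c → c ≠ 0 →
        ((fieldTr p m (c * x) = 0 ∧ fieldTr p m (l * (c * x)) = 0)
          ↔ (fieldTr p m x = 0 ∧ fieldTr p m (l * x) = 0)) := by
      intro c x hc hc0
      have h1 : l * (c * x) = c * (l * x) := by ring
      rw [fieldTr_mul_fix hc, h1, fieldTr_mul_fix hc]
      simp [hc0]
    have hpart2 := dennPartition (e := e) hp hm hF he hω hR
      (fun x => fieldTr p m x = 0 ∧ fieldTr p m (l * x) = 0) hPinv2
    have hL2 : (univ.filter fun x : F =>
        x ≠ 0 ∧ (fieldTr p m x = 0 ∧ fieldTr p m (l * x) = 0)).card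
        = p ^ (m - 2) - 1 := by
      have h1 : (univ.filter fun x : F =>
          x ≠ 0 ∧ (fieldTr p m x = 0 ∧ fieldTr p m (l * x) = 0))
          = (univ.filter fun x : F =>
              fieldTr p m x = 0 ∧ fieldTr p m (l * x) = 0).erase 0 := by
        ext x
        simp only [mem_filter, mem_univ, true_and, Finset.mem_erase]
      rw [h1, Finset.card_erase_of_mem, dennCount2 hp hF hm hlnot]
      simp only [mem_filter, mem_univ, true_and]
      rw [mul_zero]
      exact ⟨fieldTr_zero hp, fieldTr_zero hp⟩
    have hIdx : ((univ : Finset (ZMod e)).filter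
        fun i => fieldTr p m (ω ^ i.val) = 0 ∧ fieldTr p m (l * ω ^ i.val) = 0)
        = D.filter fun j => j + g ∈ D := by
      ext j
      simp only [mem_filter, mem_univ, true_and]
      rw [← hD j, ← hcond j]
    beta_reduce at hpart2
    rw [hL2, hIdx] at hpart2
    exact (Nat.div_eq_of_eq_mul_left hp1 hpart2).symm
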